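/- Let A ∈ GL₂ℤ, let S_A = {v ∈ ℤ² : ℤv + ℤ(Av) = ℤ²}, and let H_A be the subgroup of GL₂ℤ generated by A and −Id, acting on S_A by matrix multiplication. Suppose S_A is nonempty. If A is not conjugate in GL₂ℤ to (2 1; 1 1) or to −(2 1; 1 1), then H_A acts transitively on S_A; if A is conjugate in GL₂ℤ to (2 1; 1 1) or to −(2 1; 1 1), then the action of H_A on S_A has exactly two orbits. -/

import Mathlib

open Matrix

abbrev GL2Z := GL (Fin 2) ℤ

/-- `S_A = {v ∈ ℤ² : ℤv + ℤ(Av) = ℤ²}`. -/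
def SA (A : GL2Z) : Set (Fin 2 → ℤ) :=
  {v | Submodule.span ℤ {v, (A : Matrix (Fin 2) (Fin 2) ℤ).mulVec v} = ⊤}

/-- `H_A = ⟨A, -Id⟩ ≤ GL₂ℤ`. -/
def HA (A : GL2Z) : Subgroup GL2Z := Subgroup.closure {A, -1}

/-- `v` and `w` lie in the same `H_A`-orbit (for the action by matrix multiplication). -/
def SameOrbit (A : GL2Z) (v w : Fin 2 → ℤ) : Prop :=
  ∃ B ∈ HA A, (B : Matrix (Fin 2) (Fin 2) ℤ).mulVec v = w

/-- `A` is conjugate in `GL₂ℤ` to `(2 1; 1 1)` or to `-(2 1; 1 1)`. -/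
def ConjPM21 (A : GL2Z) : Prop :=
  ∃ P : GL2Z, ((P * A * P⁻¹ : GL2Z) : Matrix (Fin 2) (Fin 2) ℤ) = !![2, 1; 1, 1] ∨
    ((P * A * P⁻¹ : GL2Z) : Matrix (Fin 2) (Fin 2) ℤ) = -!![2, 1; 1, 1]

/-! ### Auxiliary machinery -/

abbrev Mat2 := Matrix (Fin 2) (Fin 2) ℤ

/-- Matrix with columns `u`, `w`. -/
def cm (u w : Fin 2 → ℤ) : Mat2 := !![u 0, w 0; u 1, w 1]

lemma cm_mulVec (u w y : Fin 2 → ℤ) : (cm u w).mulVec y = fun i => y 0 * u i + y 1 * w i := by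
  funext i
  fin_cases i <;> simp [cm, Matrix.mulVec, dotProduct, Fin.sum_univ_two] <;> ring

lemma cm_mulVec_e1 (u w : Fin 2 → ℤ) : (cm u w).mulVec ![1,0] = u := by
  funext i
  fin_cases i <;> simp [cm, Matrix.mulVec, dotProduct, Fin.sum_univ_two]

lemma mul_cm (X : Mat2) (u w : Fin 2 → ℤ) :
    X * cm u w = cm (X.mulVec u) (X.mulVec w) := by
  ext i j
  fin_cases i <;> fin_cases j <;>
    simp [cm, Matrix.mul_apply, Matrix.mulVec, dotProduct, Fin.sum_univ_two]

lemma cm_e1_e2 : cm ![1,0] ![0,1] = 1 := by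
  ext i j; fin_cases i <;> fin_cases j <;> simp [cm]

lemma mulVec2 (X : Mat2) (y : Fin 2 → ℤ) :
    X.mulVec y = ![X 0 0 * y 0 + X 0 1 * y 1, X 1 0 * y 0 + X 1 1 * y 1] := by
  funext i
  fin_cases i <;> simp [Matrix.mulVec, dotProduct, Fin.sum_univ_two]

lemma det_cm (x z : Fin 2 → ℤ) : (cm x z).det = x 0 * z 1 - z 0 * x 1 := by
  simp [cm, Matrix.det_fin_two]

lemma span_pair_iff (u w : Fin 2 → ℤ) :
    Submodule.span ℤ {u, w} = ⊤ ↔ IsUnit (cm u w).det := by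
  constructor
  · intro h
    have h1 : (![1,0] : Fin 2 → ℤ) ∈ Submodule.span ℤ {u, w} := h ▸ Submodule.mem_top
    have h2 : (![0,1] : Fin 2 → ℤ) ∈ Submodule.span ℤ {u, w} := h ▸ Submodule.mem_top
    obtain ⟨p, q, hpq⟩ := Submodule.mem_span_pair.mp h1
    obtain ⟨r, s, hrs⟩ := Submodule.mem_span_pair.mp h2
    have key : cm u w * cm ![p,q] ![r,s] = 1 := by
      have e1 : ((cm u w).mulVec ![p,q]) = ![1,0] := by
        rw [cm_mulVec]; funext i
        have := congrFun hpq i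
        simpa [Pi.smul_apply, smul_eq_mul] using this
      have e2 : ((cm u w).mulVec ![r,s]) = ![0,1] := by
        rw [cm_mulVec]; funext i
        have := congrFun hrs i
        simpa [Pi.smul_apply, smul_eq_mul] using this
      rw [mul_cm, e1, e2, cm_e1_e2]
    have : (cm u w).det * (cm ![p,q] ![r,s]).det = 1 := by
      rw [← Matrix.det_mul, key, Matrix.det_one]
    exact IsUnit.of_mul_eq_one _ this
  · intro h
    obtain ⟨D, hD⟩ := h
    rw [eq_top_iff]
    intro x _
    have hinv : cm u w * (((D⁻¹ : ℤˣ) : ℤ) • (cm u w).adjugate) = 1 := by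
      rw [Matrix.mul_smul, Matrix.mul_adjugate, smul_smul, ← hD, ← Units.val_mul,
        inv_mul_cancel, Units.val_one, one_smul]
    set y := (((D⁻¹ : ℤˣ) : ℤ) • (cm u w).adjugate).mulVec x with hy
    have hx : (cm u w).mulVec y = x := by
      rw [hy, Matrix.mulVec_mulVec, hinv, Matrix.one_mulVec]
    rw [← hx, cm_mulVec]
    exact Submodule.mem_span_pair.mpr ⟨y 0, y 1, by funext i; simp [smul_eq_mul]⟩

lemma SA_iff (A : GL2Z) (v : Fin 2 → ℤ) :
    v ∈ SA A ↔ IsUnit (cm v (A.val.mulVec v)).det := by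
  show Submodule.span ℤ {v, A.val.mulVec v} = ⊤ ↔ _
  exact span_pair_iff _ _

/-- Cayley–Hamilton for 2×2. -/
lemma ch2 (X : Mat2) : X * X = (X 0 0 + X 1 1) • X - X.det • 1 := by
  ext i j
  simp only [Matrix.smul_apply, Matrix.sub_apply, Matrix.mul_apply, Fin.sum_univ_two,
    smul_eq_mul, Matrix.det_fin_two, Matrix.one_apply]
  fin_cases i <;> fin_cases j <;> simp <;> ring

lemma det_smul_one_add_smul (a b : ℤ) (X : Mat2) :
    (a • (1:Mat2) + b • X).det = a^2 + (X 0 0 + X 1 1) * a * b + X.det * b^2 := by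
  simp only [Matrix.det_fin_two, Matrix.add_apply, Matrix.smul_apply, Matrix.one_apply,
    smul_eq_mul]
  simp
  ring

lemma commutant_companion (t d : ℤ) (B : Mat2) (h : B * !![0,-d;1,t] = !![0,-d;1,t] * B) :
    B = B 0 0 • (1:Mat2) + B 1 0 • !![0,-d;1,t] := by
  have h00 := congrFun (congrFun h 0) 0
  have h10 := congrFun (congrFun h 1) 0
  simp [Matrix.mul_apply, Fin.sum_univ_two] at h00 h10
  ext i j
  fin_cases i <;> fin_cases j <;>
    simp only [Matrix.add_apply, Matrix.smul_apply, Matrix.one_apply, smul_eq_mul] <;>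
    simp <;> linarith

lemma commutant_M (B : Mat2) (h : B * !![2,1;1,1] = !![2,1;1,1] * B) :
    B = B 1 1 • (1:Mat2) + B 0 1 • !![1,1;1,0] := by
  have h00 := congrFun (congrFun h 0) 0
  have h01 := congrFun (congrFun h 0) 1
  simp [Matrix.mul_apply, Fin.sum_univ_two] at h00 h01
  ext i j
  fin_cases i <;> fin_cases j <;>
    simp only [Matrix.add_apply, Matrix.smul_apply, Matrix.one_apply, smul_eq_mul] <;>
    simp <;> linarith

lemma intertwine (A : GL2Z) (t d : ℤ) (ht : A.val 0 0 + A.val 1 1 = t) (hd : A.val.det = d)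
    (v : Fin 2 → ℤ) :
    A.val * cm v (A.val.mulVec v) = cm v (A.val.mulVec v) * !![0,-d;1,t] := by
  set u := A.val.mulVec v with hu
  have h2 : A.val.mulVec u = fun i => (-d) * v i + t * u i := by
    have hc := ch2 A.val
    rw [ht, hd] at hc
    have : A.val.mulVec u = (A.val * A.val).mulVec v := by rw [← Matrix.mulVec_mulVec, hu]
    rw [this, hc]
    funext i
    simp only [Matrix.sub_mulVec, Matrix.smul_mulVec, Matrix.one_mulVec, Pi.sub_apply,
      Pi.smul_apply, smul_eq_mul]
    ring
  have h2' := congrFun h2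
  have hR : (!![0,-d;1,t] : Mat2) = cm ![0,1] ![-d,t] := by
    ext i j; fin_cases i <;> fin_cases j <;> simp [cm]
  rw [mul_cm, hR, mul_cm, cm_mulVec, cm_mulVec]
  ext i j
  fin_cases i <;> fin_cases j <;>
    simp [cm, h2' 0, h2' 1] <;> simp [u, Matrix.mulVec, dotProduct, Fin.sum_univ_two]

lemma inv_val (A : GL2Z) (t d : ℤ) (hd2 : d * d = 1)
    (hCH : A.val * A.val = t • A.val - d • (1:Mat2)) :
    (A⁻¹).val = d • (t • (1:Mat2) - A.val) := by
  apply Units.inv_eq_of_mul_eq_one_right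
  have : A.val * (d • (t • (1:Mat2) - A.val)) = d • (t • A.val - (t • A.val - d • 1)) := by
    rw [← hCH, mul_smul_comm, mul_sub, mul_smul_comm, mul_one]
  rw [this, sub_sub_cancel, smul_smul, hd2, one_smul]

lemma mem_HA_iff (A B : GL2Z) : B ∈ HA A ↔ ∃ k : ℤ, B = A ^ k ∨ B = -A ^ k := by
  constructor
  · intro hB
    induction hB using Subgroup.closure_induction with
    | mem x hx =>
      rcases hx with hx | hx
      · exact ⟨1, Or.inl (by rw [hx, zpow_one])⟩
      · exact ⟨0, Or.inr (by rw [hx, zpow_zero])⟩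
    | one => exact ⟨0, Or.inl (zpow_zero A).symm⟩
    | mul x y hx hy ihx ihy =>
      obtain ⟨k, hk⟩ := ihx; obtain ⟨l, hl⟩ := ihy
      refine ⟨k + l, ?_⟩
      have hz : A ^ (k+l) = A ^ k * A ^ l := _root_.zpow_add A k l
      rcases hk with hk | hk <;> rcases hl with hl | hl <;> subst hk <;> subst hl
      · exact Or.inl (by rw [hz])
      · exact Or.inr (by rw [hz, mul_neg])
      · exact Or.inr (by rw [hz, neg_mul])
      · exact Or.inl (by rw [hz, neg_mul_neg])
    | inv x hx ihx =>
      obtain ⟨k, hk⟩ := ihx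
      refine ⟨-k, ?_⟩
      rcases hk with hk | hk <;> subst hk
      · exact Or.inl (by rw [_root_.zpow_neg])
      · exact Or.inr (by rw [inv_neg, _root_.zpow_neg])
  · rintro ⟨k, h | h⟩ <;> subst h
    · exact Subgroup.zpow_mem _ (Subgroup.subset_closure (by simp)) k
    · have h1 : (-1 : GL2Z) ∈ HA A := Subgroup.subset_closure (by simp)
      have h2 : A ^ k ∈ HA A := Subgroup.zpow_mem _ (Subgroup.subset_closure (by simp)) k
      simpa [neg_one_mul] using mul_mem h1 h2

lemma mem_HA_neg (A : GL2Z) {G : GL2Z} (h : G ∈ HA A) : -G ∈ HA A := by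
  have h1 : (-1 : GL2Z) ∈ HA A := Subgroup.subset_closure (by simp)
  simpa [neg_one_mul] using mul_mem h1 h

lemma abs_eq_one_aux (x y z : ℤ) (hx : y ≤ x) (hz : y ≤ z) (hy : 1 ≤ y)
    (h : x * z = y^2 + 1) : y = 1 := by
  rcases eq_or_lt_of_le hx with he | hlt
  · subst he
    have h1 : y * (z - y) = 1 := by linear_combination h
    have h2 : y ∣ 1 := ⟨z - y, h1.symm⟩
    rcases Int.isUnit_iff.mp (isUnit_of_dvd_one h2) with h3 | h3 <;> omega
  · have h4 : (y+1) * y ≤ x * z := by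
      have := mul_le_mul (by linarith : y + 1 ≤ x) hz (by linarith) (by linarith)
      linarith
    nlinarith

set_option maxHeartbeats 1000000 in
lemma units_lemma (A : GL2Z) (t d : ℤ) (hd : d = 1 ∨ d = -1)
    (hCH : A.val * A.val = t • A.val - d • (1:Mat2))
    (hexc : d = 1 → t ≠ 3 ∧ t ≠ -3) :
    ∀ n : ℕ, ∀ a b : ℤ, b.natAbs ≤ n →
      (a^2 + t*a*b + d*b^2 = 1 ∨ a^2 + t*a*b + d*b^2 = -1) →
      ∃ k : ℤ, a • (1:Mat2) + b • A.val = ((A^k : GL2Z) : Mat2) ∨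
        a • (1:Mat2) + b • A.val = -((A^k : GL2Z) : Mat2) := by
  have hd2 : d * d = 1 := by rcases hd with h | h <;> simp [h]
  have hdna : d.natAbs = 1 := by rcases hd with h | h <;> simp [h]
  have hInv : (A⁻¹).val = d • (t • (1:Mat2) - A.val) := inv_val A t d hd2 hCH
  intro n
  induction n with
  | zero =>
    intro a b hb hN
    have hb0 : b = 0 := by omega
    subst hb0
    have hN' : a^2 = 1 ∨ a^2 = -1 := by rcases hN with h | h <;> [left; right] <;> linarith
    have ha : a = 1 ∨ a = -1 := by
      rcases hN' with h | h
      · exact Int.isUnit_iff.mp (IsUnit.of_mul_eq_one a (by nlinarith))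
      · exfalso; nlinarith [sq_nonneg a]
    refine ⟨0, ?_⟩
    rcases ha with h | h <;> subst h
    · left; rw [zpow_zero, Units.val_one]; module
    · right; rw [zpow_zero, Units.val_one]; module
  | succ n ih =>
    intro a b hb hN
    by_cases hb0 : b = 0
    · subst hb0
      have hN' : a^2 = 1 ∨ a^2 = -1 := by rcases hN with h | h <;> [left; right] <;> linarith
      have ha : a = 1 ∨ a = -1 := by
        rcases hN' with h | h
        · exact Int.isUnit_iff.mp (IsUnit.of_mul_eq_one a (by nlinarith))
        · exfalso; nlinarith [sq_nonneg a]
      refine ⟨0, ?_⟩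
      rcases ha with h | h <;> subst h
      · left; rw [zpow_zero, Units.val_one]; module
      · right; rw [zpow_zero, Units.val_one]; module
    · obtain ⟨c, hc⟩ : ∃ c, c = a + t * b := ⟨_, rfl⟩
      by_cases h1 : a.natAbs < b.natAbs
      · -- multiply on the right by A : B = B' * A
        have hN2 : (b + a*d*t)^2 + t*(b + a*d*t)*(-(a*d)) + d*(-(a*d))^2
            = d * (a^2 + t*a*b + d*b^2) := by
          linear_combination (a^2*d - b^2) * hd2
        have hN3 : (b + a*d*t)^2 + t*(b + a*d*t)*(-(a*d)) + d*(-(a*d))^2 = 1 ∨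
            (b + a*d*t)^2 + t*(b + a*d*t)*(-(a*d)) + d*(-(a*d))^2 = -1 := by
          rw [hN2]
          rcases hN with h' | h' <;> rw [h'] <;> rcases hd with h | h <;> rw [h] <;> norm_num
        have hble : (-(a*d)).natAbs ≤ n := by
          rw [Int.natAbs_neg, Int.natAbs_mul, hdna, mul_one]; omega
        obtain ⟨k, hk⟩ := ih (b + a*d*t) (-(a*d)) hble hN3
        have key : ((b + a*d*t) • (1:Mat2) + (-(a*d)) • A.val) * A.val
            = a • (1:Mat2) + b • A.val := by
          rw [add_mul, smul_mul_assoc, smul_mul_assoc, one_mul, hCH]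
          match_scalars
          · ring
          · linear_combination a * hd2
        refine ⟨k + 1, ?_⟩
        rcases hk with hk | hk
        · left
          rw [← key, hk, ← Units.val_mul, ← _root_.zpow_add_one]
        · right
          rw [← key, hk, neg_mul, ← Units.val_mul, ← _root_.zpow_add_one]
      · by_cases h2 : c.natAbs < b.natAbs
        · -- B' = B * A ; B = B' * A⁻¹
          have hN2 : (-(b*d))^2 + t*(-(b*d))*c + d*c^2 = d * (a^2 + t*a*b + d*b^2) := by
            rw [hc]; ring
          have hN3 : (-(b*d))^2 + t*(-(b*d))*c + d*c^2 = 1 ∨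
              (-(b*d))^2 + t*(-(b*d))*c + d*c^2 = -1 := by
            rw [hN2]
            rcases hN with h' | h' <;> rw [h'] <;> rcases hd with h | h <;> rw [h] <;> norm_num
          obtain ⟨k, hk⟩ := ih (-(b*d)) c (by omega) hN3
          have key : (a • (1:Mat2) + b • A.val) * A.val
              = (-(b*d)) • (1:Mat2) + c • A.val := by
            rw [add_mul, smul_mul_assoc, smul_mul_assoc, one_mul, hCH, hc]
            match_scalars <;> ring
          have cancel : ∀ X : Mat2, X * A.val * (A⁻¹).val = X := by
            intro X
            rw [mul_assoc, ← Units.val_mul, mul_inv_cancel, Units.val_one, mul_one]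
          refine ⟨k - 1, ?_⟩
          rcases hk with hk | hk
          · left
            have : (a • (1:Mat2) + b • A.val) * A.val = ((A^k : GL2Z) : Mat2) := by
              rw [key, hk]
            calc a • (1:Mat2) + b • A.val
                = (a • (1:Mat2) + b • A.val) * A.val * (A⁻¹).val := (cancel _).symm
              _ = ((A^k : GL2Z) : Mat2) * (A⁻¹).val := by rw [this]
              _ = ((A^(k-1) : GL2Z) : Mat2) := by
                  rw [← Units.val_mul, ← _root_.zpow_sub_one]
          · right
            have : (a • (1:Mat2) + b • A.val) * A.val = -((A^k : GL2Z) : Mat2) := by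
              rw [key, hk]
            calc a • (1:Mat2) + b • A.val
                = (a • (1:Mat2) + b • A.val) * A.val * (A⁻¹).val := (cancel _).symm
              _ = -((A^k : GL2Z) : Mat2) * (A⁻¹).val := by rw [this]
              _ = -((A^(k-1) : GL2Z) : Mat2) := by
                  rw [neg_mul, ← Units.val_mul, ← _root_.zpow_sub_one]
        · -- stuck case
          push_neg at h1 h2
          have hba : |b| ≤ |a| := by
            rw [Int.abs_eq_natAbs, Int.abs_eq_natAbs]; exact_mod_cast h1
          have hbc : |b| ≤ |c| := by
            rw [Int.abs_eq_natAbs, Int.abs_eq_natAbs]; exact_mod_cast h2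
          have hb1 : 1 ≤ |b| := Int.one_le_abs (by omega)
          have hNac : a * c + d * b^2 = 1 ∨ a * c + d * b^2 = -1 := by
            rcases hN with h | h <;> [left; right] <;> rw [hc] <;> linear_combination h
          have habs : |a| * |c| = |a * c| := (abs_mul a c).symm
          have hmm : |b| * |b| ≤ |a| * |c| :=
            mul_le_mul hba hbc (abs_nonneg b) (abs_nonneg a)
          rcases hd with hd1 | hd1 <;> subst hd1
          · -- d = 1 : always a contradiction
            exfalso
            obtain ⟨ht3, ht4⟩ := hexc rfl
            rcases hNac with hE | hE
            · have h5 : a * c = 1 - b^2 := by linarith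
              have h6 : |a * c| = b^2 - 1 := by
                rw [h5, abs_of_nonpos (by nlinarith [mul_le_mul hb1 hb1 (by norm_num) (abs_nonneg b), abs_mul_abs_self b] : (1:ℤ) - b^2 ≤ 0)]; ring
              nlinarith [abs_mul_abs_self b, pow_two b]
            · have h5 : a * c = -1 - b^2 := by linarith
              have h6 : |a * c| = b^2 + 1 := by
                rw [h5, abs_of_nonpos (by nlinarith [sq_nonneg b] : (-1:ℤ) - b^2 ≤ 0)]; ring
              have hb1' : |b| = 1 := by
                apply abs_eq_one_aux |a| |b| |c| hba hbc hb1
                rw [habs, h6, sq_abs]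
              have hbpm : b = 1 ∨ b = -1 := (abs_eq (by norm_num)).mp hb1'
              have hc0 : c ≠ 0 := by intro h0; rw [h0, mul_zero] at h5; nlinarith
              have hc1 : 1 ≤ |c| := Int.one_le_abs hc0
              have ha2 : |a| ≤ 2 := by nlinarith [sq_abs b]
              obtain ⟨ha3, ha4⟩ := abs_le.mp ha2
              rcases hbpm with hb' | hb' <;> subst hb' <;> (interval_cases a <;> omega)
          · -- d = -1
            rcases hNac with hE | hE
            · -- the surviving case : a*c = b^2 + 1
              have h5 : a * c = b^2 + 1 := by linarith
              have h6 : |a * c| = b^2 + 1 := by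
                rw [h5, abs_of_nonneg (by nlinarith [sq_nonneg b] : (0:ℤ) ≤ b^2 + 1)]
              have hb1' : |b| = 1 := by
                apply abs_eq_one_aux |a| |b| |c| hba hbc hb1
                rw [habs, h6, sq_abs]
              have hbpm : b = 1 ∨ b = -1 := (abs_eq (by norm_num)).mp hb1'
              have hc0 : c ≠ 0 := by intro h0; rw [h0, mul_zero] at h5; nlinarith
              have hc1 : 1 ≤ |c| := Int.one_le_abs hc0
              have ha2 : |a| ≤ 2 := by nlinarith [sq_abs b]
              obtain ⟨ha3, ha4⟩ := abs_le.mp ha2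
              have hfin : (t = 1 ∧ ((a = 1 ∧ b = 1) ∨ (a = -1 ∧ b = -1) ∨
                    (a = 2 ∧ b = -1) ∨ (a = -2 ∧ b = 1))) ∨
                  (t = -1 ∧ ((a = -1 ∧ b = 1) ∨ (a = 1 ∧ b = -1) ∨
                    (a = 2 ∧ b = 1) ∨ (a = -2 ∧ b = -1))) := by
                rcases hbpm with hb' | hb' <;> subst hb' <;> (interval_cases a <;> omega)
              rcases hfin with ⟨ht', hcase⟩ | ⟨ht', hcase⟩ <;> subst ht'
              · -- t = 1
                have hA2 : A.val * A.val = A.val + 1 := by rw [hCH]; module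
                have hI : (A⁻¹).val = A.val - 1 := by rw [hInv]; module
                have hp2 : ((A^(2:ℤ) : GL2Z) : Mat2) = A.val + 1 := by
                  rw [zpow_two, Units.val_mul, hA2]
                have hm2 : ((A^(-2:ℤ) : GL2Z) : Mat2) = 2 • (1:Mat2) - A.val := by
                  rw [show ((-2:ℤ)) = -(2:ℤ) from rfl, _root_.zpow_neg, zpow_two,
                    _root_.mul_inv_rev, Units.val_mul, hI]
                  have e : (A.val - 1) * (A.val - 1) = A.val*A.val - A.val - A.val + 1 := by
                    noncomm_ring
                  rw [e, hA2]; module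
                rcases hcase with ⟨h7, h8⟩ | ⟨h7, h8⟩ | ⟨h7, h8⟩ | ⟨h7, h8⟩ <;>
                  subst h7 <;> subst h8
                · exact ⟨2, Or.inl (by rw [hp2]; module)⟩
                · exact ⟨2, Or.inr (by rw [hp2]; module)⟩
                · exact ⟨-2, Or.inl (by rw [hm2]; module)⟩
                · exact ⟨-2, Or.inr (by rw [hm2]; module)⟩
              · -- t = -1
                have hA2 : A.val * A.val = (1:Mat2) - A.val := by rw [hCH]; module
                have hI : (A⁻¹).val = A.val + 1 := by rw [hInv]; module
                have hp2 : ((A^(2:ℤ) : GL2Z) : Mat2) = (1:Mat2) - A.val := by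
                  rw [zpow_two, Units.val_mul, hA2]
                have hm2 : ((A^(-2:ℤ) : GL2Z) : Mat2) = 2 • (1:Mat2) + A.val := by
                  rw [show ((-2:ℤ)) = -(2:ℤ) from rfl, _root_.zpow_neg, zpow_two,
                    _root_.mul_inv_rev, Units.val_mul, hI]
                  have e : (A.val + 1) * (A.val + 1) = A.val*A.val + A.val + A.val + 1 := by
                    noncomm_ring
                  rw [e, hA2]; module
                rcases hcase with ⟨h7, h8⟩ | ⟨h7, h8⟩ | ⟨h7, h8⟩ | ⟨h7, h8⟩ <;>
                  subst h7 <;> subst h8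
                · exact ⟨2, Or.inr (by rw [hp2]; module)⟩
                · exact ⟨2, Or.inl (by rw [hp2]; module)⟩
                · exact ⟨-2, Or.inl (by rw [hm2]; module)⟩
                · exact ⟨-2, Or.inr (by rw [hm2]; module)⟩
            · -- d = -1, N = -1 : contradiction
              exfalso
              have h5 : a * c = b^2 - 1 := by linarith
              have h6 : |a * c| = b^2 - 1 := by
                rw [h5, abs_of_nonneg (by nlinarith [mul_le_mul hb1 hb1 (by norm_num) (abs_nonneg b), abs_mul_abs_self b] : (0:ℤ) ≤ b^2 - 1)]
              nlinarith [abs_mul_abs_self b, pow_two b]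

/-! ### Concrete elements of `GL₂ℤ` -/

def MU : GL2Z := ⟨!![2,1;1,1], !![1,-1;-1,2], by decide, by decide⟩
def FU : GL2Z := ⟨!![1,1;1,0], !![0,1;1,-1], by decide, by decide⟩
def RU : GL2Z := ⟨!![1,2;0,1], !![1,-2;0,1], by decide, by decide⟩
def RU' : GL2Z := ⟨!![1,-2;0,-1], !![1,-2;0,-1], by decide, by decide⟩

lemma conj_zpow' (P X : GL2Z) (k : ℤ) : (P * X * P⁻¹)^k = P * X^k * P⁻¹ := by
  have h := map_zpow (MulAut.conj P) X k
  simpa [MulAut.conj_apply] using h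

lemma det_val_zpow (A : GL2Z) (h : A.val.det = 1) (k : ℤ) : ((A^k : GL2Z) : Mat2).det = 1 := by
  have hA1 : Units.map (Matrix.detMonoidHom) A = 1 := by
    apply Units.ext
    rw [Units.coe_map]
    exact h
  have h2 : Units.map (Matrix.detMonoidHom) (A^k) = 1 := by
    rw [map_zpow, hA1, _root_.one_zpow]
  have h3 := congrArg Units.val h2
  rw [Units.coe_map] at h3
  exact h3

lemma SA_transport (A Q N : GL2Z) (hA_eq : A = Q⁻¹ * N * Q) (y : Fin 2 → ℤ) :
    ((Q⁻¹).val.mulVec y) ∈ SA A ↔ IsUnit (cm y (N.val.mulVec y)).det := by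
  rw [SA_iff]
  have hc : Q.val * (Q⁻¹).val = 1 := by
    rw [← Units.val_mul, mul_inv_cancel, Units.val_one]
  have h1 : A.val.mulVec ((Q⁻¹).val.mulVec y) = (Q⁻¹).val.mulVec (N.val.mulVec y) := by
    rw [hA_eq, Units.val_mul, Units.val_mul, Matrix.mulVec_mulVec, Matrix.mulVec_mulVec,
      mul_assoc ((Q⁻¹).val * N.val) Q.val (Q⁻¹).val, hc, mul_one]
  rw [h1, ← mul_cm, Matrix.det_mul]
  have hQiu : IsUnit ((Q⁻¹).val.det) := (Matrix.isUnit_iff_isUnit_det _).mp (Q⁻¹).isUnit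
  rcases Int.isUnit_iff.mp hQiu with h | h <;> rw [h]
  · rw [one_mul]
  · rw [neg_one_mul]
    exact IsUnit.neg_iff _

theorem orbits_of_HA_on_SA (A : GL2Z) (hne : (SA A).Nonempty) :
    (¬ ConjPM21 A → ∀ v ∈ SA A, ∀ w ∈ SA A, SameOrbit A v w) ∧
    (ConjPM21 A →
      ∃ v ∈ SA A, ∃ w ∈ SA A, ¬ SameOrbit A v w ∧
        ∀ u ∈ SA A, SameOrbit A v u ∨ SameOrbit A w u) := by
  constructor
  · -- transitive case
    intro hnc v hv w hw
    obtain ⟨t, ht⟩ : ∃ t, A.val 0 0 + A.val 1 1 = t := ⟨_, rfl⟩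
    obtain ⟨d, hd⟩ : ∃ d, A.val.det = d := ⟨_, rfl⟩
    have hdu : d = 1 ∨ d = -1 :=
      Int.isUnit_iff.mp (hd ▸ (Matrix.isUnit_iff_isUnit_det _).mp A.isUnit)
    have hCdet : (!![0,-d;1,t] : Mat2).det = d := by simp [Matrix.det_fin_two]
    obtain ⟨CU, hCU⟩ := (Matrix.isUnit_iff_isUnit_det (!![0,-d;1,t] : Mat2)).mpr
      (by rw [hCdet]; exact Int.isUnit_iff.mpr hdu)
    have hCch : CU.val * CU.val = t • CU.val - d • (1:Mat2) := by
      rw [hCU]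
      have h := ch2 (!![0,-d;1,t] : Mat2)
      rw [hCdet] at h
      simpa using h
    obtain ⟨PvU, hPv⟩ := (Matrix.isUnit_iff_isUnit_det _).mpr ((SA_iff A v).mp hv)
    obtain ⟨PwU, hPw⟩ := (Matrix.isUnit_iff_isUnit_det _).mpr ((SA_iff A w).mp hw)
    have hAPv : A * PvU = PvU * CU := by
      apply Units.ext
      rw [Units.val_mul, Units.val_mul, hPv, hCU]
      exact intertwine A t d ht hd v
    have hAPw : A * PwU = PwU * CU := by
      apply Units.ext
      rw [Units.val_mul, Units.val_mul, hPw, hCU]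
      exact intertwine A t d ht hd w
    have hA_eq : A = PvU * CU * PvU⁻¹ := by
      calc A = (A * PvU) * PvU⁻¹ := by group
        _ = (PvU * CU) * PvU⁻¹ := by rw [hAPv]
        _ = PvU * CU * PvU⁻¹ := by group
    have h1 : PvU⁻¹ * A = CU * PvU⁻¹ := by rw [hA_eq]; group
    have hDcomm : (PvU⁻¹ * PwU) * CU = CU * (PvU⁻¹ * PwU) := by
      calc (PvU⁻¹ * PwU) * CU = PvU⁻¹ * (PwU * CU) := by group
        _ = PvU⁻¹ * (A * PwU) := by rw [← hAPw]
        _ = (PvU⁻¹ * A) * PwU := by group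
        _ = CU * (PvU⁻¹ * PwU) := by rw [h1]; group
    have hDval : (PvU⁻¹ * PwU).val * (!![0,-d;1,t] : Mat2)
        = !![0,-d;1,t] * (PvU⁻¹ * PwU).val := by
      rw [← hCU, ← Units.val_mul, ← Units.val_mul, hDcomm]
    have hDab := commutant_companion t d _ hDval
    obtain ⟨a, ha⟩ : ∃ a, (PvU⁻¹ * PwU).val 0 0 = a := ⟨_, rfl⟩
    obtain ⟨b, hb⟩ : ∃ b, (PvU⁻¹ * PwU).val 1 0 = b := ⟨_, rfl⟩
    rw [ha, hb] at hDab
    have hDab' : (PvU⁻¹ * PwU).val = a • (1:Mat2) + b • CU.val := by rw [hCU]; exact hDab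
    have hNorm : a^2 + t*a*b + d*b^2 = 1 ∨ a^2 + t*a*b + d*b^2 = -1 := by
      have hDdet : IsUnit ((PvU⁻¹ * PwU).val).det :=
        (Matrix.isUnit_iff_isUnit_det _).mp (Units.isUnit _)
      have e : ((PvU⁻¹ * PwU).val).det = a^2 + t*a*b + d*b^2 := by
        rw [hDab, det_smul_one_add_smul, hCdet]
        simp
        try ring
      rw [e] at hDdet
      exact Int.isUnit_iff.mp hDdet
    have hexc : d = 1 → t ≠ 3 ∧ t ≠ -3 := by
      intro hd1; subst hd1
      constructor <;> intro ht3 <;> subst ht3 <;> apply hnc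
      · refine ⟨RU * PvU⁻¹, Or.inl ?_⟩
        have e : RU * PvU⁻¹ * A * (RU * PvU⁻¹)⁻¹ = RU * CU * RU⁻¹ := by
          rw [hA_eq]; group
        rw [e, Units.val_mul, Units.val_mul, hCU]
        decide
      · refine ⟨RU' * PvU⁻¹, Or.inr ?_⟩
        have e : RU' * PvU⁻¹ * A * (RU' * PvU⁻¹)⁻¹ = RU' * CU * RU'⁻¹ := by
          rw [hA_eq]; group
        rw [e, Units.val_mul, Units.val_mul, hCU]
        decide
    obtain ⟨k, hk⟩ := units_lemma CU t d hdu hCch hexc b.natAbs a b le_rfl hNorm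
    have hmv : ∀ G : GL2Z, (PwU * PvU⁻¹).val = G.val → G.val.mulVec v = w := by
      intro G hG
      have hv' : v = PvU.val.mulVec ![1,0] := by rw [hPv, cm_mulVec_e1]
      have h2 : G.val.mulVec v = (PwU.val * (PvU⁻¹).val).mulVec v := by
        rw [← hG, Units.val_mul]
      rw [h2, hv', Matrix.mulVec_mulVec, mul_assoc, ← Units.val_mul, inv_mul_cancel,
        Units.val_one, mul_one, hPw, cm_mulVec_e1]
    rcases hk with hk | hk
    · have hDU : PvU⁻¹ * PwU = CU ^ k := by
        apply Units.ext
        rw [hDab', hk]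
      refine ⟨A ^ k, (mem_HA_iff A _).mpr ⟨k, Or.inl rfl⟩, ?_⟩
      apply hmv
      have h3 : PwU * PvU⁻¹ = A ^ k := by
        calc PwU * PvU⁻¹ = PvU * (PvU⁻¹ * PwU) * PvU⁻¹ := by group
          _ = PvU * CU ^ k * PvU⁻¹ := by rw [hDU]
          _ = A ^ k := by rw [hA_eq, conj_zpow']
      rw [h3]
    · have hDU : PvU⁻¹ * PwU = -(CU ^ k) := by
        apply Units.ext
        rw [Units.val_neg, hDab', hk]
      refine ⟨-(A ^ k), (mem_HA_iff A _).mpr ⟨k, Or.inr rfl⟩, ?_⟩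
      apply hmv
      have h3 : PwU * PvU⁻¹ = -(A ^ k) := by
        calc PwU * PvU⁻¹ = PvU * (PvU⁻¹ * PwU) * PvU⁻¹ := by group
          _ = PvU * (-(CU ^ k)) * PvU⁻¹ := by rw [hDU]
          _ = -(PvU * CU ^ k * PvU⁻¹) := by rw [mul_neg, neg_mul]
          _ = -(A ^ k) := by rw [hA_eq, conj_zpow']
      rw [h3]
  · -- two-orbit case
    intro hc21
    obtain ⟨Q, hQ⟩ := hc21
    obtain ⟨N, hN⟩ : ∃ N, Q * A * Q⁻¹ = N := ⟨_, rfl⟩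
    rw [hN] at hQ
    have hNu : N = MU ∨ N = -MU := by
      rcases hQ with h | h
      · left; exact Units.ext h
      · right; apply Units.ext; rw [Units.val_neg]; exact h
    have hA_eq : A = Q⁻¹ * N * Q := by rw [← hN]; group
    have hq1 : (Q⁻¹).val.det * Q.val.det = 1 := by
      rw [← Matrix.det_mul, ← Units.val_mul, inv_mul_cancel, Units.val_one, Matrix.det_one]
    have hdetN : N.val.det = 1 := by
      rcases hNu with h | h
      · rw [h]; decide
      · rw [h, Units.val_neg]; decide
    have hdetA : A.val.det = 1 := by
      rw [hA_eq, Units.val_mul, Units.val_mul, Matrix.det_mul, Matrix.det_mul, hdetN]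
      linear_combination hq1
    have hQc : ∀ z : Fin 2 → ℤ, Q.val.mulVec ((Q⁻¹).val.mulVec z) = z := by
      intro z
      rw [Matrix.mulVec_mulVec, ← Units.val_mul, mul_inv_cancel, Units.val_one,
        Matrix.one_mulVec]
    have hFM : FU * FU = MU := Units.ext (by decide)
    refine ⟨(Q⁻¹).val.mulVec ![1,0], ?_, (Q⁻¹).val.mulVec ![1,1], ?_, ?_, ?_⟩
    · rw [SA_transport A Q N hA_eq]
      apply Int.isUnit_iff.mpr
      rcases hNu with h | h <;> rw [h] <;>
        [skip; rw [Units.val_neg, Matrix.neg_mulVec]] <;>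
        rw [det_cm, mulVec2] <;> simp [MU]
    · rw [SA_transport A Q N hA_eq]
      apply Int.isUnit_iff.mpr
      rcases hNu with h | h <;> rw [h] <;>
        [skip; rw [Units.val_neg, Matrix.neg_mulVec]] <;>
        rw [det_cm, mulVec2] <;> simp [MU]
    · -- the two base points are not in the same orbit
      rintro ⟨B, hBmem, hBvec⟩
      obtain ⟨k, hBk⟩ := (mem_HA_iff A B).mp hBmem
      have hdetB : B.val.det = 1 := by
        rcases hBk with h | h <;> rw [h]
        · exact det_val_zpow A hdetA k
        · rw [Units.val_neg, Matrix.det_neg]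
          rw [det_val_zpow A hdetA k]
          norm_num
      have hcommA : B * A = A * B := by
        have hAk : A ^ k * A = A * A ^ k := by
          rw [← _root_.zpow_add_one, ← _root_.zpow_one_add, add_comm]
        rcases hBk with h | h <;> rw [h]
        · exact hAk
        · rw [neg_mul, mul_neg, hAk]
      obtain ⟨B', hB'⟩ : ∃ B', Q * B * Q⁻¹ = B' := ⟨_, rfl⟩
      have hB'N : B' * N = N * B' := by
        rw [← hB', ← hN]
        calc Q * B * Q⁻¹ * (Q * A * Q⁻¹) = Q * (B * A) * Q⁻¹ := by group
          _ = Q * (A * B) * Q⁻¹ := by rw [hcommA]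
          _ = Q * A * Q⁻¹ * (Q * B * Q⁻¹) := by group
      have hB'M : B'.val * !![2,1;1,1] = !![2,1;1,1] * B'.val := by
        rcases hNu with h | h
        · rw [h] at hB'N
          have h2 := congrArg Units.val hB'N
          rw [Units.val_mul, Units.val_mul] at h2
          exact h2
        · rw [h] at hB'N
          have h2 := congrArg Units.val hB'N
          rw [Units.val_mul, Units.val_mul, Units.val_neg, mul_neg, neg_mul] at h2
          exact neg_inj.mp h2
      have hBF := commutant_M B'.val hB'M
      obtain ⟨s, hs⟩ : ∃ s, B'.val 1 1 = s := ⟨_, rfl⟩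
      obtain ⟨q, hq'⟩ : ∃ q, B'.val 0 1 = q := ⟨_, rfl⟩
      rw [hs, hq'] at hBF
      have hvec1 : B'.val.mulVec ![1,0] = ![1,1] := by
        rw [← hB', Units.val_mul, Units.val_mul, ← Matrix.mulVec_mulVec,
          ← Matrix.mulVec_mulVec, hBvec]
        exact hQc _
      have hcomp : (s • (1:Mat2) + q • !![1,1;1,0]).mulVec ![1,0] = ![s + q, q] := by
        funext i
        fin_cases i <;>
          simp only [Matrix.mulVec, dotProduct, Fin.sum_univ_two, Matrix.add_apply,
            Matrix.smul_apply, Matrix.one_apply, smul_eq_mul] <;> simp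
      rw [hBF, hcomp] at hvec1
      have e0 := congrFun hvec1 0
      have e1' := congrFun hvec1 1
      simp at e0 e1'
      have hs0 : s = 0 := by omega
      have hq1' : q = 1 := by omega
      have hB'F : B'.val = !![1,1;1,0] := by
        rw [hBF, hs0, hq1']
        module
      have hdB' : B'.val.det = 1 := by
        rw [← hB', Units.val_mul, Units.val_mul, Matrix.det_mul, Matrix.det_mul, hdetB]
        linear_combination hq1
      rw [hB'F] at hdB'
      norm_num [Matrix.det_fin_two] at hdB'
    · -- coverage
      intro u hu
      obtain ⟨y, hy⟩ : ∃ y, Q.val.mulVec u = y := ⟨_, rfl⟩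
      have hyu : (Q⁻¹).val.mulVec y = u := by
        rw [← hy, Matrix.mulVec_mulVec, ← Units.val_mul, inv_mul_cancel, Units.val_one,
          Matrix.one_mulVec]
      have hY : IsUnit (cm y (N.val.mulVec y)).det := by
        rw [← SA_transport A Q N hA_eq y, hyu]
        exact hu
      have hYM : IsUnit (cm y (MU.val.mulVec y)).det := by
        rcases hNu with h | h
        · rw [← h]; exact hY
        · have h2 : N.val.mulVec y = -(MU.val.mulVec y) := by
            rw [h, Units.val_neg, Matrix.neg_mulVec]
          rw [h2, det_cm] at hY
          rw [det_cm]
          simp only [Pi.neg_apply] at hY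
          have h3 : y 0 * (MU.val.mulVec y) 1 - (MU.val.mulVec y) 0 * y 1
              = -(y 0 * -((MU.val.mulVec y) 1) - -((MU.val.mulVec y) 0) * y 1) := by ring
          rw [h3]
          exact (IsUnit.neg_iff _).mpr hY
      obtain ⟨PuU, hPuU⟩ := (Matrix.isUnit_iff_isUnit_det _).mpr hYM
      have hMint : MU.val * PuU.val = PuU.val * !![0,-1;1,3] := by
        rw [hPuU]
        exact intertwine MU 3 1 (by decide) (by decide) y
      have hRint : (RU⁻¹).val * MU.val = !![0,-1;1,3] * (RU⁻¹).val := by decide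
      have hBcomm : (PuU * RU⁻¹).val * MU.val = MU.val * (PuU * RU⁻¹).val := by
        simp only [Units.val_mul]
        rw [mul_assoc, hRint, ← mul_assoc, ← hMint, mul_assoc]
      have hBF := commutant_M (PuU * RU⁻¹).val (by
        have : (!![2,1;1,1] : Mat2) = MU.val := rfl
        rw [this]; exact hBcomm)
      obtain ⟨s, hs⟩ : ∃ s, (PuU * RU⁻¹).val 1 1 = s := ⟨_, rfl⟩
      obtain ⟨q, hq'⟩ : ∃ q, (PuU * RU⁻¹).val 0 1 = q := ⟨_, rfl⟩
      rw [hs, hq'] at hBF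
      have hdetB2 : IsUnit (((PuU * RU⁻¹).val).det) :=
        (Matrix.isUnit_iff_isUnit_det _).mp (Units.isUnit _)
      have e : ((PuU * RU⁻¹).val).det = s^2 + 1*s*q + (-1)*q^2 := by
        rw [hBF, det_smul_one_add_smul]
        simp [Matrix.det_fin_two]
        try ring
      rw [e] at hdetB2
      have hNormF := Int.isUnit_iff.mp hdetB2
      obtain ⟨k, hk⟩ := units_lemma FU 1 (-1) (Or.inr rfl) (by decide)
        (by norm_num) q.natAbs s q le_rfl hNormF
      have hBU : PuU * RU⁻¹ = FU ^ k ∨ PuU * RU⁻¹ = -(FU ^ k) := by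
        rcases hk with h | h
        · left; apply Units.ext; rw [hBF]; exact h
        · right; apply Units.ext; rw [Units.val_neg, hBF]; exact h
      have hconjM : ∀ m : ℤ, (∃ G ∈ HA A, Q * G * Q⁻¹ = MU ^ m) ∧
          (∃ G ∈ HA A, Q * G * Q⁻¹ = -(MU ^ m)) := by
        intro m
        have hNm : Q * A ^ m * Q⁻¹ = N ^ m := by
          have h4 : N = Q * A * Q⁻¹ := hN.symm
          rw [h4, conj_zpow']
        have base : ∃ G ∈ HA A, Q * G * Q⁻¹ = MU ^ m ∨ Q * G * Q⁻¹ = -(MU ^ m) := by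
          rcases hNu with h | h
          · exact ⟨A ^ m, (mem_HA_iff A _).mpr ⟨m, Or.inl rfl⟩, Or.inl (by rw [hNm, h])⟩
          · have hcomm : Commute (-1 : GL2Z) MU := Commute.neg_one_left MU
            have hNm2 : N ^ m = (-1 : GL2Z) ^ m * MU ^ m := by
              rw [h, show (-MU : GL2Z) = (-1) * MU from (neg_one_mul MU).symm,
                hcomm.mul_zpow]
            rcases Int.even_or_odd m with hpar | hpar
            · have h5 : ((-1 : GL2Z)) ^ m = 1 := Even.neg_one_zpow hpar
              refine ⟨A ^ m, (mem_HA_iff A _).mpr ⟨m, Or.inl rfl⟩, Or.inl ?_⟩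
              rw [hNm, hNm2, h5, one_mul]
            · have h5 : ((-1 : GL2Z)) ^ m = -1 := by
                obtain ⟨j, hj⟩ := hpar
                rw [hj, _root_.zpow_add, _root_.zpow_mul, _root_.zpow_one]
                have h6 : ((-1 : GL2Z)) ^ (2:ℤ) = 1 := by
                  rw [zpow_two, neg_mul_neg, one_mul]
                rw [h6, _root_.one_zpow, one_mul]
              refine ⟨A ^ m, (mem_HA_iff A _).mpr ⟨m, Or.inl rfl⟩, Or.inr ?_⟩
              rw [hNm, hNm2, h5, neg_one_mul]
        obtain ⟨G, hG, hcase⟩ := base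
        rcases hcase with h | h
        · exact ⟨⟨G, hG, h⟩, ⟨-G, mem_HA_neg A hG, by rw [mul_neg, neg_mul, h]⟩⟩
        · exact ⟨⟨-G, mem_HA_neg A hG, by rw [mul_neg, neg_mul, h, neg_neg]⟩, ⟨G, hG, h⟩⟩
      have hBe1 : (PuU * RU⁻¹).val.mulVec ![1,0] = y := by
        rw [Units.val_mul, ← Matrix.mulVec_mulVec]
        have h7 : (RU⁻¹).val.mulVec ![1,0] = ![1,0] := by
          funext i
          fin_cases i <;> simp [RU, Matrix.mulVec, dotProduct, Fin.sum_univ_two]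
        rw [h7, hPuU, cm_mulVec_e1]
      have orbit_of : ∀ (X : GL2Z) (z : Fin 2 → ℤ), (∃ G ∈ HA A, Q * G * Q⁻¹ = X) →
          X.val.mulVec z = y → SameOrbit A ((Q⁻¹).val.mulVec z) u := by
        rintro X z ⟨G, hG, hGX⟩ hXz
        refine ⟨G, hG, ?_⟩
        have hGx : G = Q⁻¹ * X * Q := by rw [← hGX]; group
        show G.val.mulVec _ = u
        rw [hGx, Units.val_mul, Units.val_mul, ← Matrix.mulVec_mulVec,
          ← Matrix.mulVec_mulVec, hQc, hXz, hyu]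
      rcases Int.even_or_odd k with ⟨m, hm⟩ | ⟨m, hm⟩
      · left
        have hFk : FU ^ k = MU ^ m := by
          rw [hm]
          calc FU ^ (m + m) = FU ^ m * FU ^ m := _root_.zpow_add FU m m
            _ = (FU * FU) ^ m := ((Commute.refl FU).mul_zpow m).symm
            _ = MU ^ m := by rw [hFM]
        rcases hBU with h | h
        · obtain ⟨G, hG, hGX⟩ := (hconjM m).1
          exact orbit_of _ _ ⟨G, hG, hGX⟩ (by rw [← hFk, ← h]; exact hBe1)
        · obtain ⟨G, hG, hGX⟩ := (hconjM m).2
          refine orbit_of _ _ ⟨G, hG, hGX⟩ ?_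
          have h8 : -(MU ^ m) = PuU * RU⁻¹ := by rw [h, hFk]
          rw [h8]
          exact hBe1
      · right
        have hFk : FU ^ k = MU ^ m * FU := by
          rw [hm]
          calc FU ^ (2*m + 1) = FU ^ (2*m) * FU ^ (1:ℤ) := _root_.zpow_add FU (2*m) 1
            _ = (FU ^ (2:ℤ)) ^ m * FU := by rw [_root_.zpow_mul, _root_.zpow_one]
            _ = MU ^ m * FU := by rw [zpow_two, hFM]
        have hFie : (FU⁻¹).val.mulVec ![1,1] = ![1,0] := by
          funext i
          fin_cases i <;> simp [FU, Matrix.mulVec, dotProduct, Fin.sum_univ_two]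
        rcases hBU with h | h
        · obtain ⟨G, hG, hGX⟩ := (hconjM m).1
          refine orbit_of _ _ ⟨G, hG, hGX⟩ ?_
          have hX : (MU ^ m) = (PuU * RU⁻¹) * FU⁻¹ := by rw [h, hFk]; group
          rw [hX, Units.val_mul, ← Matrix.mulVec_mulVec, hFie, hBe1]
        · obtain ⟨G, hG, hGX⟩ := (hconjM m).2
          refine orbit_of _ _ ⟨G, hG, hGX⟩ ?_
          have hX : (-(MU ^ m)) = (PuU * RU⁻¹) * FU⁻¹ := by
            rw [h, hFk, neg_mul]
            have e3 : (MU ^ m * FU) * FU⁻¹ = MU ^ m := by group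
            rw [e3]
          rw [hX, Units.val_mul, ← Matrix.mulVec_mulVec, hFie, hBe1]
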